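/- For 0 ≤ α ≤ 1, the multiple Mahler measure m(1−x, 1−e^{2πiα}x) := ∫_0^1 log|1−e^{2πiθ}| · log|1−e^{2πi(θ+α)}| dθ equals (π²/2)(α² − α + 1/6). -/

import Mathlib

open Real MeasureTheory intervalIntegral

noncomputable def mlf (r θ : ℝ) : ℝ :=
  Real.log ‖1 - (r : ℂ) * Complex.exp (2 * π * Complex.I * θ)‖

lemma mlf_hasSum {r : ℝ} (hr : |r| < 1) (θ : ℝ) :
    HasSum (fun n : ℕ => -(r ^ n * Real.cos (2 * π * n * θ) / n)) (mlf r θ) := by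
  set z : ℂ := (r : ℂ) * Complex.exp (2 * π * Complex.I * θ) with hz
  have hznorm : ‖z‖ < 1 := by
    rw [hz, norm_mul]
    rw [Complex.norm_exp]
    simp only [Complex.norm_real, Real.norm_eq_abs]
    have : (2 * ↑π * Complex.I * ↑θ).re = 0 := by simp
    rw [this, Real.exp_zero, mul_one]
    exact hr
  have h := (Complex.hasSum_taylorSeries_neg_log hznorm).neg
  rw [neg_neg] at h
  have h2 := Complex.hasSum_re h
  have hre : (Complex.log (1 - z)).re = mlf r θ := by
    rw [Complex.log_re, mlf]
  rw [hre] at h2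
  convert h2 using 2 with n
  have hzn : -(z ^ n / (n : ℂ)) = ((-(r ^ n * Real.cos (2 * π * n * θ) / n) : ℝ) : ℂ)
      + ((-(r ^ n * Real.sin (2 * π * n * θ) / n) : ℝ) : ℂ) * Complex.I := by
    have : z ^ n = ((r ^ n : ℝ) : ℂ) * Complex.exp (((2 * π * n * θ : ℝ) : ℂ) * Complex.I) := by
      rw [hz, mul_pow, ← Complex.exp_nat_mul]
      push_cast
      ring_nf
    rw [this, Complex.exp_mul_I]
    have hcn : ((n : ℂ)) = ((n : ℝ) : ℂ) := by push_cast; rfl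
    rw [hcn]
    push_cast
    rcases eq_or_ne n 0 with h0 | h0
    · simp [h0]
    · have h0' : ((n:ℂ)) ≠ 0 := Nat.cast_ne_zero.mpr h0
      field_simp
      ring
  rw [hzn, Complex.add_re, Complex.ofReal_re, Complex.mul_I_re, Complex.ofReal_im]
  ring

lemma mlf_abs_sq (r θ : ℝ) :
    (‖1 - (r : ℂ) * Complex.exp (2 * π * Complex.I * θ)‖)^2
      = (1 - r)^2 + 4 * r * Real.sin (π * θ)^2 := by
  have harg : 2 * (π:ℂ) * Complex.I * θ = ((2 * π * θ : ℝ) : ℂ) * Complex.I := by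
    push_cast; ring
  rw [harg, Complex.sq_norm]
  have hre : (1 - (r:ℂ) * Complex.exp (((2 * π * θ : ℝ):ℂ) * Complex.I)).re
      = 1 - r * Real.cos (2 * π * θ) := by
    rw [Complex.sub_re, Complex.one_re, Complex.mul_re, Complex.ofReal_re, Complex.ofReal_im,
      Complex.exp_ofReal_mul_I_re, Complex.exp_ofReal_mul_I_im]
    ring
  have him : (1 - (r:ℂ) * Complex.exp (((2 * π * θ : ℝ):ℂ) * Complex.I)).im
      = -(r * Real.sin (2 * π * θ)) := by
    rw [Complex.sub_im, Complex.one_im, Complex.mul_im, Complex.ofReal_re, Complex.ofReal_im,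
      Complex.exp_ofReal_mul_I_re, Complex.exp_ofReal_mul_I_im]
    ring
  rw [Complex.normSq_apply, hre, him]
  have h1 : Real.cos (2 * π * θ) = 1 - 2 * Real.sin (π * θ)^2 := by
    have h2 : 2 * π * θ = 2 * (π * θ) := by ring
    rw [h2, Real.cos_two_mul]
    have h3 := Real.sin_sq_add_cos_sq (π * θ)
    nlinarith
  have h4 : Real.sin (2 * π * θ) ^ 2 = 1 - Real.cos (2 * π * θ)^2 := by
    have := Real.sin_sq_add_cos_sq (2 * π * θ); nlinarith
  linear_combination r^2 * h4 - 2*r*h1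

lemma mlf_le_log_two {r : ℝ} (h0 : 0 ≤ r) (h1 : r ≤ 1) (θ : ℝ) : mlf r θ ≤ Real.log 2 := by
  have habs : ‖1 - (r : ℂ) * Complex.exp (2 * π * Complex.I * θ)‖ ≤ 2 := by
    calc ‖1 - (r : ℂ) * Complex.exp (2 * π * Complex.I * θ)‖
        ≤ ‖(1:ℂ)‖ + ‖(r : ℂ) * Complex.exp (2 * π * Complex.I * θ)‖ :=
          norm_sub_le _ _
      _ ≤ 2 := by
          rw [norm_one, norm_mul, Complex.norm_exp]
          have : (2 * (π:ℂ) * Complex.I * θ).re = 0 := by simp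
          rw [this, Real.exp_zero, mul_one, Complex.norm_real, Real.norm_eq_abs, abs_of_nonneg h0]
          linarith
  rcases eq_or_lt_of_le (norm_nonneg (1 - (r : ℂ) * Complex.exp (2 * π * Complex.I * θ)))
    with h | h
  · rw [mlf, ← h, Real.log_zero]; positivity
  · exact Real.log_le_log h habs

lemma log_sin_le_mlf {r : ℝ} (hr : 1/2 ≤ r) (h1 : r ≤ 1) {θ : ℝ} (hs : Real.sin (π * θ) ≠ 0) :
    Real.log |Real.sin (π * θ)| ≤ mlf r θ := by
  have key : |Real.sin (π * θ)| ≤ ‖1 - (r : ℂ) * Complex.exp (2 * π * Complex.I * θ)‖ := by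
    have h2 : |Real.sin (π * θ)|^2 ≤ (‖1 - (r : ℂ) * Complex.exp (2 * π * Complex.I * θ)‖)^2 := by
      rw [mlf_abs_sq, sq_abs]
      nlinarith [sq_nonneg (Real.sin (π * θ)), sq_nonneg (1 - r)]
    have := Real.sqrt_le_sqrt h2
    rwa [Real.sqrt_sq (abs_nonneg _), Real.sqrt_sq (norm_nonneg _)] at this
  exact Real.log_le_log (abs_pos.mpr hs) key

lemma abs_mlf_le {r : ℝ} (hr : 1/2 ≤ r) (h1 : r ≤ 1) {θ : ℝ} (hs : Real.sin (π * θ) ≠ 0) :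
    |mlf r θ| ≤ Real.log 2 + |Real.log (|Real.sin (π * θ)|)| := by
  rw [abs_le]
  constructor
  · have hl := log_sin_le_mlf hr h1 hs
    have h3 : (0:ℝ) ≤ Real.log 2 := Real.log_nonneg (by norm_num)
    have h4 := neg_abs_le (Real.log |Real.sin (π * θ)|)
    linarith
  · have := mlf_le_log_two (by linarith) h1 θ
    have h2 : (0:ℝ) ≤ |Real.log (|Real.sin (π * θ)|)| := abs_nonneg _
    linarith

lemma cos_mul_cos' (x y : ℝ) : Real.cos x * Real.cos y = (Real.cos (x - y) + Real.cos (x + y)) / 2 := by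
  rw [Real.cos_sub, Real.cos_add]; ring

lemma integral_cos_linear (k : ℤ) (d : ℝ) :
    ∫ θ in (0:ℝ)..1, Real.cos (2 * π * (k:ℝ) * θ + d) = if k = 0 then Real.cos d else 0 := by
  rcases eq_or_ne k 0 with hk | hk
  · simp [hk]
  · have hc : 2 * π * (k:ℝ) ≠ 0 := by
      have : (k:ℝ) ≠ 0 := Int.cast_ne_zero.mpr hk
      have := Real.pi_ne_zero
      positivity
    rw [if_neg hk]
    have := intervalIntegral.integral_comp_mul_add Real.cos hc d (a := 0) (b := 1)
    rw [this, integral_cos]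
    have h1 : 2 * π * (k:ℝ) * 1 + d = d + k * (2 * π) := by ring
    have h2 : 2 * π * (k:ℝ) * 0 + d = d := by ring
    rw [h1, h2, Real.sin_add_int_mul_two_pi, sub_self, smul_zero]

lemma cos_orthogonality (n m : ℕ) (α : ℝ) :
    ∫ θ in (0:ℝ)..1, Real.cos (2 * π * n * θ) * Real.cos (2 * π * m * (θ + α))
      = if n = m ∧ 0 < n then Real.cos (2 * π * n * α) / 2
        else if n = 0 ∧ m = 0 then 1 else 0 := by
  have step1 : ∫ θ in (0:ℝ)..1, Real.cos (2 * π * n * θ) * Real.cos (2 * π * m * (θ + α))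
      = ∫ θ in (0:ℝ)..1, ((Real.cos (2 * π * ((((n:ℤ) - m):ℤ):ℝ) * θ + -(2 * π * m * α))
        + Real.cos (2 * π * ((((n:ℤ) + m):ℤ):ℝ) * θ + 2 * π * m * α)) / 2) := by
    apply intervalIntegral.integral_congr
    intro θ _
    simp only [cos_mul_cos']
    have e1 : 2 * π * (n:ℝ) * θ - 2 * π * (m:ℝ) * (θ + α)
        = 2 * π * ((((n:ℤ) - m):ℤ):ℝ) * θ + -(2 * π * m * α) := by push_cast; ring
    have e2 : 2 * π * (n:ℝ) * θ + 2 * π * (m:ℝ) * (θ + α)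
        = 2 * π * ((((n:ℤ) + m):ℤ):ℝ) * θ + 2 * π * m * α := by push_cast; ring
    rw [e1, e2]
  rw [step1]
  have i1 : IntervalIntegrable (fun θ => Real.cos (2 * π * ((((n:ℤ) - m):ℤ):ℝ) * θ + -(2 * π * m * α)))
      MeasureTheory.volume 0 1 := (Continuous.intervalIntegrable (by continuity) _ _)
  have i2 : IntervalIntegrable (fun θ => Real.cos (2 * π * ((((n:ℤ) + m):ℤ):ℝ) * θ + 2 * π * m * α))
      MeasureTheory.volume 0 1 := (Continuous.intervalIntegrable (by continuity) _ _)
  rw [intervalIntegral.integral_div, intervalIntegral.integral_add i1 i2,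
    integral_cos_linear ((n:ℤ) - m), integral_cos_linear ((n:ℤ) + m)]
  rcases Nat.eq_zero_or_pos n with hn | hn
  · rcases Nat.eq_zero_or_pos m with hm | hm
    · subst hn; subst hm; norm_num
    · subst hn
      have h1 : ¬((((0:ℕ)):ℤ) - (m:ℤ) = 0) := by omega
      have h2 : ¬((((0:ℕ)):ℤ) + (m:ℤ) = 0) := by omega
      rw [if_neg h1, if_neg h2]
      simp [hm.ne', hm.ne]
  · have h2 : ¬((n:ℤ) + (m:ℤ) = 0) := by omega
    rw [if_neg h2]
    rcases eq_or_ne n m with he | he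
    · subst he
      have h1 : ((n:ℤ) - (n:ℤ) = 0) := by omega
      rw [if_pos h1, if_pos ⟨rfl, hn⟩]
      rw [Real.cos_neg]
      ring
    · have h1 : ¬((n:ℤ) - (m:ℤ) = 0) := by omega
      rw [if_neg h1]
      have : ¬(n = m ∧ 0 < n) := by tauto
      rw [if_neg this]
      have : ¬(n = 0 ∧ m = 0) := by omega
      rw [if_neg this]
      norm_num

lemma mlf_continuous {r : ℝ} (hr : |r| < 1) : Continuous (mlf r) := by
  apply Continuous.log
  · exact continuous_norm.comp (by continuity)
  · intro θ
    rw [ne_eq, norm_eq_zero, sub_eq_zero]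
    intro h
    have : ‖(r:ℂ) * Complex.exp (2 * π * Complex.I * θ)‖ = 1 := by rw [← h, norm_one]
    rw [norm_mul, Complex.norm_exp] at this
    have h2 : (2 * (π:ℂ) * Complex.I * θ).re = 0 := by simp
    rw [h2, Real.exp_zero, mul_one, Complex.norm_real, Real.norm_eq_abs] at this
    exact absurd this (ne_of_lt hr)

lemma mlf_bound {r : ℝ} (hr0 : 0 ≤ r) (hr1 : r < 1) (θ : ℝ) :
    |mlf r θ| ≤ Real.log 2 + |Real.log (1 - r)| := by
  have hub : mlf r θ ≤ Real.log 2 := by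
    have habs : ‖1 - (r : ℂ) * Complex.exp (2 * π * Complex.I * θ)‖ ≤ 2 := by
      calc ‖1 - (r : ℂ) * Complex.exp (2 * π * Complex.I * θ)‖
          ≤ ‖(1:ℂ)‖ + ‖(r : ℂ) * Complex.exp (2 * π * Complex.I * θ)‖ :=
            norm_sub_le _ _
        _ ≤ 2 := by
            rw [norm_one, norm_mul, Complex.norm_exp]
            have : (2 * (π:ℂ) * Complex.I * θ).re = 0 := by simp
            rw [this, Real.exp_zero, mul_one, Complex.norm_real, Real.norm_eq_abs, abs_of_nonneg hr0]
            linarith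
    rcases eq_or_lt_of_le (norm_nonneg (1 - (r : ℂ) * Complex.exp (2 * π * Complex.I * θ)))
      with h | h
    · rw [mlf, ← h, Real.log_zero]; positivity
    · exact Real.log_le_log h habs
  have hlb : Real.log (1 - r) ≤ mlf r θ := by
    have habs : 1 - r ≤ ‖1 - (r : ℂ) * Complex.exp (2 * π * Complex.I * θ)‖ := by
      have h1 : ‖(r : ℂ) * Complex.exp (2 * π * Complex.I * θ)‖ = r := by
        rw [norm_mul, Complex.norm_exp]
        have : (2 * (π:ℂ) * Complex.I * θ).re = 0 := by simp
        rw [this, Real.exp_zero, mul_one, Complex.norm_real, Real.norm_eq_abs, abs_of_nonneg hr0]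
      have h2 := norm_sub_norm_le (1 : ℂ) ((r : ℂ) * Complex.exp (2 * π * Complex.I * θ))
      rw [norm_one, h1] at h2
      linarith
    exact Real.log_le_log (by linarith) habs
  rw [abs_le]
  constructor
  · have h4 := neg_abs_le (Real.log (1 - r))
    have h3 : (0:ℝ) ≤ Real.log 2 := Real.log_nonneg (by norm_num)
    linarith
  · have h2 : (0:ℝ) ≤ |Real.log (1 - r)| := abs_nonneg _
    linarith

lemma integral_norm_le_of_bound {f : ℝ → ℝ} (hf : Integrable f (volume.restrict (Set.Ioc (0:ℝ) 1)))
    {C : ℝ} (hC : ∀ θ, |f θ| ≤ C) :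
    ∫ θ, |f θ| ∂(volume.restrict (Set.Ioc (0:ℝ) 1)) ≤ C := by
  have h1 : ∫ θ, |f θ| ∂(volume.restrict (Set.Ioc (0:ℝ) 1))
      ≤ ∫ _, C ∂(volume.restrict (Set.Ioc (0:ℝ) 1)) :=
    integral_mono hf.abs (integrable_const C) hC
  rwa [MeasureTheory.integral_const, Measure.real, Measure.restrict_apply_univ, Real.volume_Ioc,
    show (1:ℝ) - 0 = 1 by norm_num, ENNReal.ofReal_one, ENNReal.toReal_one, one_smul] at h1

lemma inner_integral {r : ℝ} (hr0 : 0 < r) (hr1 : r < 1) (α : ℝ) (n : ℕ) :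
    ∫ θ in (0:ℝ)..1, Real.cos (2 * π * n * θ) * mlf r (θ + α)
      = -(r ^ n * Real.cos (2 * π * n * α) / (2 * n)) := by
  have hr : |r| < 1 := by rw [abs_of_nonneg hr0.le]; exact hr1
  have hcont := mlf_continuous hr
  set G : ℕ → ℝ → ℝ := fun m θ => Real.cos (2 * π * n * θ) * (-(r ^ m * Real.cos (2 * π * m * (θ + α)) / m)) with hG
  have key : ∀ θ : ℝ, Real.cos (2 * π * n * θ) * mlf r (θ + α) = ∑' m, G m θ := by
    intro θ
    rw [hG, tsum_mul_left, (mlf_hasSum hr (θ + α)).tsum_eq]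
  have hGcont : ∀ m, Continuous (G m) := by
    intro m; apply Continuous.mul (by continuity); continuity
  have hGint : ∀ m, Integrable (G m) (volume.restrict (Set.Ioc (0:ℝ) 1)) :=
    fun m => (hGcont m).integrableOn_Ioc
  have hGbound : ∀ m, ∀ θ : ℝ, |G m θ| ≤ r ^ m := by
    intro m θ
    rw [hG, abs_mul, abs_neg, abs_div]
    rcases Nat.eq_zero_or_pos m with hm | hm
    · simp [hm]
    · have h1 : |Real.cos (2 * π * n * θ)| ≤ 1 := Real.abs_cos_le_one _
      have h2 : |Real.cos (2 * π * m * (θ + α))| ≤ 1 := Real.abs_cos_le_one _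
      have h3 : (1:ℝ) ≤ |(m:ℝ)| := by
        rw [abs_of_nonneg (Nat.cast_nonneg m)]; exact_mod_cast hm
      have hrm : (0:ℝ) < r ^ m := pow_pos hr0 m
      rw [abs_mul, abs_pow, abs_of_nonneg hr0.le]
      calc |Real.cos (2 * π * n * θ)| * (r ^ m * |Real.cos (2 * π * m * (θ + α))| / |(m:ℝ)|)
          ≤ 1 * (r ^ m * 1 / 1) := by
            apply mul_le_mul h1 _ (by positivity) zero_le_one
            apply div_le_div₀ (by positivity) _ (by norm_num) h3
            exact mul_le_mul_of_nonneg_left h2 hrm.le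
        _ = r ^ m := by ring
  have hGsum : Summable fun m => ∫ θ, ‖G m θ‖ ∂(volume.restrict (Set.Ioc (0:ℝ) 1)) := by
    apply Summable.of_nonneg_of_le (fun m => integral_nonneg fun θ => norm_nonneg _)
      (fun m => integral_norm_le_of_bound (hGint m) (hGbound m))
      (summable_geometric_of_lt_one hr0.le hr1)
  have swap := MeasureTheory.integral_tsum_of_summable_integral_norm hGint hGsum
  rw [intervalIntegral.integral_of_le zero_le_one]
  simp only [key]
  rw [← swap]
  have each : ∀ m : ℕ, (∫ θ, G m θ ∂(volume.restrict (Set.Ioc (0:ℝ) 1)))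
      = -(r ^ m / (m:ℝ)) * (if n = m ∧ 0 < n then Real.cos (2 * π * n * α) / 2
          else if n = 0 ∧ m = 0 then 1 else 0) := by
    intro m
    have hGm : ∀ θ : ℝ, G m θ
        = (-(r ^ m / (m:ℝ))) * (Real.cos (2 * π * n * θ) * Real.cos (2 * π * m * (θ + α))) := by
      intro θ; rw [hG]; ring
    simp only [hGm]
    rw [MeasureTheory.integral_const_mul, ← intervalIntegral.integral_of_le zero_le_one,
      cos_orthogonality]
  rw [tsum_congr each]
  rcases Nat.eq_zero_or_pos n with hn | hn
  · subst hn
    have hz : ∀ m : ℕ, -(r ^ m / (m:ℝ)) * (if (0:ℕ) = m ∧ 0 < (0:ℕ) then Real.cos (2 * π * (0:ℕ) * α) / 2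
        else if (0:ℕ) = 0 ∧ m = 0 then 1 else 0) = 0 := by
      intro m
      rcases Nat.eq_zero_or_pos m with hm | hm
      · subst hm; norm_num
      · have : ¬((0:ℕ) = m ∧ 0 < (0:ℕ)) := by omega
        rw [if_neg this]
        have : ¬((0:ℕ) = 0 ∧ m = 0) := by omega
        rw [if_neg this]
        ring
    rw [tsum_congr hz, tsum_zero]
    norm_num
  · have hterm : ∀ m : ℕ, -(r ^ m / (m:ℝ)) * (if n = m ∧ 0 < n then Real.cos (2 * π * n * α) / 2
        else if n = 0 ∧ m = 0 then 1 else 0)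
        = if m = n then -(r ^ n * Real.cos (2 * π * n * α) / (2 * n)) else 0 := by
      intro m
      rcases eq_or_ne m n with he | he
      · subst he
        rw [if_pos ⟨rfl, hn⟩, if_pos rfl]
        ring
      · rw [if_neg (by tauto), if_neg (by omega : ¬(n = 0 ∧ m = 0)), if_neg he]
        ring
    rw [tsum_congr hterm, tsum_ite_eq]

lemma mlf_integral {r : ℝ} (hr0 : 0 < r) (hr1 : r < 1) (α : ℝ) :
    ∫ θ in (0:ℝ)..1, mlf r θ * mlf r (θ + α)
      = ∑' n : ℕ, r ^ (2 * n) * Real.cos (2 * π * n * α) / (2 * n ^ 2) := by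
  have hr : |r| < 1 := by rw [abs_of_nonneg hr0.le]; exact hr1
  have hcont := mlf_continuous hr
  set B : ℝ := Real.log 2 + |Real.log (1 - r)| with hB
  have hBpos : 0 ≤ B := by
    have : (0:ℝ) ≤ Real.log 2 := Real.log_nonneg (by norm_num)
    have := abs_nonneg (Real.log (1 - r))
    rw [hB]; linarith
  set F : ℕ → ℝ → ℝ := fun n θ => -(r ^ n * Real.cos (2 * π * n * θ) / n) * mlf r (θ + α) with hF
  have key : ∀ θ : ℝ, mlf r θ * mlf r (θ + α) = ∑' n, F n θ := by
    intro θ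
    rw [hF, tsum_mul_right, (mlf_hasSum hr θ).tsum_eq]
  have hFcont : ∀ n, Continuous (F n) := by
    intro n
    apply Continuous.mul (by continuity)
    exact hcont.comp (by continuity)
  have hFint : ∀ n, Integrable (F n) (volume.restrict (Set.Ioc (0:ℝ) 1)) :=
    fun n => (hFcont n).integrableOn_Ioc
  have hFbound : ∀ n, ∀ θ : ℝ, |F n θ| ≤ r ^ n * B := by
    intro n θ
    rw [hF, abs_mul, abs_neg, abs_div]
    have hmlf := mlf_bound hr0.le hr1 (θ + α)
    rcases Nat.eq_zero_or_pos n with hn | hn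
    · subst hn; simp [hBpos]
    · have h1 : |Real.cos (2 * π * n * θ)| ≤ 1 := Real.abs_cos_le_one _
      have h3 : (1:ℝ) ≤ |(n:ℝ)| := by
        rw [abs_of_nonneg (Nat.cast_nonneg n)]; exact_mod_cast hn
      have hrm : (0:ℝ) < r ^ n := pow_pos hr0 n
      rw [abs_mul, abs_pow, abs_of_nonneg hr0.le]
      calc r ^ n * |Real.cos (2 * π * n * θ)| / |(n:ℝ)| * |mlf r (θ + α)|
          ≤ r ^ n * 1 / 1 * B := by
            apply mul_le_mul _ hmlf (abs_nonneg _) (by positivity)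
            apply div_le_div₀ (by positivity) _ (by norm_num) h3
            exact mul_le_mul_of_nonneg_left h1 hrm.le
        _ = r ^ n * B := by ring
  have hFsum : Summable fun n => ∫ θ, ‖F n θ‖ ∂(volume.restrict (Set.Ioc (0:ℝ) 1)) := by
    apply Summable.of_nonneg_of_le (fun n => integral_nonneg fun θ => norm_nonneg _)
      (fun n => integral_norm_le_of_bound (hFint n) (hFbound n))
    exact (summable_geometric_of_lt_one hr0.le hr1).mul_right B
  have swap := MeasureTheory.integral_tsum_of_summable_integral_norm hFint hFsum
  rw [intervalIntegral.integral_of_le zero_le_one]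
  simp only [key]
  rw [← swap]
  have each : ∀ n : ℕ, (∫ θ, F n θ ∂(volume.restrict (Set.Ioc (0:ℝ) 1)))
      = r ^ (2 * n) * Real.cos (2 * π * n * α) / (2 * n ^ 2) := by
    intro n
    have hFn : ∀ θ : ℝ, F n θ
        = (-(r ^ n / (n:ℝ))) * (Real.cos (2 * π * n * θ) * mlf r (θ + α)) := by
      intro θ; rw [hF]; ring
    simp only [hFn]
    rw [MeasureTheory.integral_const_mul, ← intervalIntegral.integral_of_le zero_le_one,
      inner_integral hr0 hr1]
    rcases Nat.eq_zero_or_pos n with hn | hn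
    · subst hn; norm_num
    · have hne : ((n:ℝ)) ≠ 0 := Nat.cast_ne_zero.mpr hn.ne'
      field_simp
      ring
  rw [tsum_congr each]

noncomputable def mG (θ : ℝ) : ℝ := Real.log 2 + |Real.log (|Real.sin (π * θ)|)|

lemma mG_nonneg (θ : ℝ) : 0 ≤ mG θ := by
  have : (0:ℝ) ≤ Real.log 2 := Real.log_nonneg (by norm_num)
  have := abs_nonneg (Real.log (|Real.sin (π * θ)|))
  rw [mG]; linarith

lemma mG_measurable : Measurable mG := by
  apply Measurable.add measurable_const
  apply Measurable.abs
  apply Real.measurable_log.comp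
  exact (continuous_abs.comp (Real.continuous_sin.comp (continuous_const.mul continuous_id))).measurable

lemma mG_periodic : Function.Periodic mG 1 := by
  intro θ
  rw [mG, mG]
  have : π * (θ + 1) = π * θ + π := by ring
  rw [this, Real.sin_add_pi, abs_neg]

lemma log_sq_le {x : ℝ} (hx : 0 < x) (hx1 : x ≤ 1) : (Real.log x)^2 ≤ 16 * x ^ (-(1/2) : ℝ) := by
  have hy : (0:ℝ) < x ^ (-(1/4) : ℝ) := Real.rpow_pos_of_pos hx _
  have hlogy : Real.log (x ^ (-(1/4) : ℝ)) = -(1/4) * Real.log x := Real.log_rpow hx _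
  have h1 : Real.log (x ^ (-(1/4) : ℝ)) ≤ x ^ (-(1/4) : ℝ) :=
    (Real.log_le_sub_one_of_pos hy).trans (by linarith)
  have hneg : Real.log x ≤ 0 := Real.log_nonpos hx.le hx1
  have h2 : -Real.log x ≤ 4 * x ^ (-(1/4) : ℝ) := by
    rw [hlogy] at h1; linarith
  have h3 : (Real.log x)^2 ≤ (4 * x ^ (-(1/4) : ℝ))^2 := by
    nlinarith
  calc (Real.log x)^2 ≤ (4 * x ^ (-(1/4) : ℝ))^2 := h3
    _ = 16 * (x ^ (-(1/4) : ℝ) * x ^ (-(1/4) : ℝ)) := by ring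
    _ = 16 * x ^ (-(1/2) : ℝ) := by
        rw [← Real.rpow_add hx]; norm_num

lemma sin_pi_lb {θ : ℝ} (h0 : 0 < θ) (h1 : θ < 1) : 2 * θ * (1 - θ) ≤ Real.sin (π * θ) := by
  rcases le_or_gt θ (1/2) with h | h
  · have key : 2 / π * (π * θ) ≤ Real.sin (π * θ) :=
      Real.mul_le_sin (by positivity) (by nlinarith [Real.pi_pos])
    have : 2 / π * (π * θ) = 2 * θ := by
      field_simp
    rw [this] at key
    nlinarith
  · have key : 2 / π * (π * (1 - θ)) ≤ Real.sin (π * (1 - θ)) :=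
      Real.mul_le_sin (by nlinarith [Real.pi_pos]) (by nlinarith [Real.pi_pos])
    have e1 : 2 / π * (π * (1 - θ)) = 2 * (1 - θ) := by
      field_simp
    have e2 : Real.sin (π * (1 - θ)) = Real.sin (π * θ) := by
      rw [show π * (1 - θ) = π - π * θ by ring, Real.sin_pi_sub]
    rw [e1, e2] at key
    nlinarith

lemma mG_sq_bound {θ : ℝ} (h0 : 0 < θ) (h1 : θ < 1) :
    (mG θ)^2 ≤ 3 * (Real.log 2)^2 + 48 * θ ^ (-(1/2) : ℝ) + 48 * (1 - θ) ^ (-(1/2) : ℝ) := by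
  have hsin : 0 < Real.sin (π * θ) := lt_of_lt_of_le (by nlinarith) (sin_pi_lb h0 h1)
  have hsin1 : Real.sin (π * θ) ≤ 1 := Real.sin_le_one _
  have hlog : |Real.log (|Real.sin (π * θ)|)| ≤ |Real.log θ| + |Real.log (1 - θ)| := by
    rw [abs_of_pos hsin]
    have hle : Real.log (2 * θ * (1 - θ)) ≤ Real.log (Real.sin (π * θ)) :=
      Real.log_le_log (by nlinarith) (sin_pi_lb h0 h1)
    have hexp : Real.log (2 * θ * (1 - θ)) = Real.log 2 + Real.log θ + Real.log (1 - θ) := by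
      rw [Real.log_mul (by positivity) (by linarith), Real.log_mul (by norm_num) (by linarith)]
    have hub : Real.log (Real.sin (π * θ)) ≤ 0 := Real.log_nonpos hsin.le hsin1
    have habs : |Real.log (Real.sin (π * θ))| = -Real.log (Real.sin (π * θ)) := abs_of_nonpos hub
    have hlt : Real.log θ ≤ 0 := Real.log_nonpos h0.le h1.le
    have hlt2 : Real.log (1 - θ) ≤ 0 := Real.log_nonpos (by linarith) (by linarith)
    have hl2 : (0:ℝ) ≤ Real.log 2 := Real.log_nonneg (by norm_num)
    rw [habs, abs_of_nonpos hlt, abs_of_nonpos hlt2]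
    rw [hexp] at hle
    linarith
  have h2 : mG θ ≤ Real.log 2 + |Real.log θ| + |Real.log (1 - θ)| := by
    rw [mG]; linarith
  have hsq : (mG θ)^2 ≤ (Real.log 2 + |Real.log θ| + |Real.log (1 - θ)|)^2 := by
    have := mG_nonneg θ
    nlinarith
  have e1 : (Real.log θ)^2 ≤ 16 * θ ^ (-(1/2) : ℝ) := log_sq_le h0 h1.le
  have e2 : (Real.log (1 - θ))^2 ≤ 16 * (1 - θ) ^ (-(1/2) : ℝ) := log_sq_le (by linarith) (by linarith)
  have hsq2 : (Real.log 2 + |Real.log θ| + |Real.log (1 - θ)|)^2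
      ≤ 3 * ((Real.log 2)^2 + (Real.log θ)^2 + (Real.log (1 - θ))^2) := by
    have a1 := sq_abs (Real.log θ)
    have a2 := sq_abs (Real.log (1 - θ))
    nlinarith [sq_nonneg (Real.log 2 - |Real.log θ|), sq_nonneg (Real.log 2 - |Real.log (1-θ)|),
      sq_nonneg (|Real.log θ| - |Real.log (1-θ)|)]
  nlinarith

lemma mG_sq_intervalIntegrable : IntervalIntegrable (fun θ => (mG θ)^2) volume 0 1 := by
  have hrpow : IntervalIntegrable (fun x : ℝ => x ^ (-(1/2) : ℝ)) volume 0 1 :=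
    intervalIntegral.intervalIntegrable_rpow' (by norm_num)
  have hrpow2 : IntervalIntegrable (fun x : ℝ => (1 - x) ^ (-(1/2) : ℝ)) volume 0 1 := by
    have := (hrpow.comp_sub_left 1).symm
    simpa using this
  have hbound : IntervalIntegrable
      (fun θ : ℝ => 3 * (Real.log 2)^2 + 48 * θ ^ (-(1/2) : ℝ) + 48 * (1 - θ) ^ (-(1/2) : ℝ))
      volume 0 1 :=
    ((_root_.intervalIntegrable_const).add (hrpow.const_mul 48)).add (hrpow2.const_mul 48)
  rw [intervalIntegrable_iff_integrableOn_Ioc_of_le zero_le_one] at hbound ⊢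
  apply Integrable.mono' hbound
  · exact ((mG_measurable.pow_const 2).aestronglyMeasurable)
  · have h1 : ∀ᵐ θ ∂(volume.restrict (Set.Ioc (0:ℝ) 1)), θ ∈ Set.Ioc (0:ℝ) 1 :=
      ae_restrict_mem measurableSet_Ioc
    have h2 : ∀ᵐ θ : ℝ ∂(volume.restrict (Set.Ioc (0:ℝ) 1)), θ ≠ 1 := by
      refine ae_restrict_of_ae ?_
      have : volume ({1} : Set ℝ) = 0 := measure_singleton 1
      rw [ae_iff]
      apply measure_mono_null _ this
      intro x hx
      simpa using hx
    filter_upwards [h1, h2] with θ hθ hθ1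
    rw [Real.norm_eq_abs, abs_of_nonneg (sq_nonneg _)]
    exact mG_sq_bound hθ.1 (lt_of_le_of_ne hθ.2 hθ1)

lemma bernoulli_poly_two_eval (α : ℝ) :
    (Polynomial.map (algebraMap ℚ ℝ) (Polynomial.bernoulli 2)).eval α = α^2 - α + 1/6 := by
  have h2 : bernoulli 2 = 1/6 := by
    rw [bernoulli_eq_bernoulli'_of_ne_one (by norm_num), bernoulli'_two]
  simp [Polynomial.bernoulli, Finset.sum_range_succ, h2, bernoulli_zero, bernoulli_one]
  ring

lemma sum_eval {α : ℝ} (h0 : 0 ≤ α) (h1 : α ≤ 1) :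
    ∑' n : ℕ, Real.cos (2 * π * n * α) / (2 * (n:ℝ)^2) = π^2/2 * (α^2 - α + 1/6) := by
  have H := hasSum_one_div_nat_pow_mul_cos (k := 1) one_ne_zero (Set.mem_Icc.mpr ⟨h0, h1⟩)
  have H2 := (H.div_const 2).tsum_eq
  have hc : ∀ n : ℕ, (1/(n:ℝ)^(2*1) * Real.cos (2 * π * n * α))/2
      = Real.cos (2 * π * n * α) / (2 * (n:ℝ)^2) := by
    intro n
    norm_num
    ring
  rw [tsum_congr hc] at H2
  rw [H2, bernoulli_poly_two_eval]
  norm_num [Nat.factorial]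
  ring

lemma mG_sq_shift_intervalIntegrable {α : ℝ} (h0 : 0 ≤ α) (h1 : α ≤ 1) :
    IntervalIntegrable (fun θ => (mG (θ + α))^2) volume 0 1 := by
  have base := mG_sq_intervalIntegrable
  have h2 : IntervalIntegrable (fun θ => (mG θ)^2) volume α 1 :=
    base.mono_set (Set.uIcc_subset_uIcc
      (Set.mem_uIcc.mpr (Or.inl ⟨h0, h1⟩)) (Set.mem_uIcc.mpr (Or.inl ⟨zero_le_one, le_refl 1⟩)))
  have h4 : IntervalIntegrable (fun θ => (mG θ)^2) volume 0 α :=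
    base.mono_set (Set.uIcc_subset_uIcc
      (Set.mem_uIcc.mpr (Or.inl ⟨le_refl 0, zero_le_one⟩)) (Set.mem_uIcc.mpr (Or.inl ⟨h0, h1⟩)))
  have h5 := h4.comp_add_right (-1)
  have hfun : (fun x => (mG (x + -1))^2) = fun x => (mG x)^2 := by
    funext x
    have := mG_periodic (x - 1)
    rw [show x - 1 + 1 = x by ring] at this
    rw [show x + -1 = x - 1 by ring, this]
  rw [hfun] at h5
  have h5' : IntervalIntegrable (fun θ => (mG θ)^2) volume 1 (1 + α) := by
    have e1 : (0:ℝ) - -1 = 1 := by norm_num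
    have e2 : α - -1 = 1 + α := by ring
    rwa [e1, e2] at h5
  have h6 : IntervalIntegrable (fun θ => (mG θ)^2) volume α (1 + α) := h2.trans h5'
  have h7 := h6.comp_add_right α
  have e3 : α - α = (0:ℝ) := by ring
  have e4 : 1 + α - α = (1:ℝ) := by ring
  rwa [e3, e4] at h7

open Real in
theorem mahler_linear_pair (α : ℝ) (h0 : 0 ≤ α) (h1 : α ≤ 1) :
    ∫ θ in (0:ℝ)..1,
        Real.log ‖1 - Complex.exp (2 * π * Complex.I * θ)‖ *
        Real.log ‖1 - Complex.exp (2 * π * Complex.I * (θ + α))‖ =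
    (π^2 / 2) * (α^2 - α + 1/6) := by
  set rk : ℕ → ℝ := fun k => 1 - 1/(k+2) with hrk
  have hrk_half : ∀ k, 1/2 ≤ rk k := by
    intro k
    have he : rk k = 1 - 1/((k:ℝ)+2) := rfl
    have hk2 : (2:ℝ) ≤ (k:ℝ) + 2 := by
      have := Nat.cast_nonneg (α := ℝ) k
      linarith
    have : 1/((k:ℝ)+2) ≤ 1/2 :=
      div_le_div_of_nonneg_left (by norm_num) (by norm_num) hk2
    rw [he]
    linarith
  have hrk_pos : ∀ k, 0 < rk k := fun k => lt_of_lt_of_le (by norm_num) (hrk_half k)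
  have hrk_lt : ∀ k, rk k < 1 := by
    intro k
    have he : rk k = 1 - 1/((k:ℝ)+2) := rfl
    have : 0 < 1/((k:ℝ)+2) := by positivity
    rw [he]
    linarith
  have htend : Filter.Tendsto rk Filter.atTop (nhds 1) := by
    rw [hrk]
    have h2 : Filter.Tendsto (fun k : ℕ => ((k:ℝ)+2)) Filter.atTop Filter.atTop :=
      Filter.tendsto_atTop_add_const_right _ 2 tendsto_natCast_atTop_atTop
    have h3 : Filter.Tendsto (fun k : ℕ => 1/((k:ℝ)+2)) Filter.atTop (nhds 0) := by
      exact tendsto_const_nhds.div_atTop h2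
    have := (tendsto_const_nhds (x := (1:ℝ)) (f := Filter.atTop (α := ℕ))).sub h3
    simpa using this
  -- a.e. non-vanishing of the sines
  have hae : ∀ᵐ θ : ℝ ∂volume, Real.sin (π * θ) ≠ 0 ∧ Real.sin (π * (θ + α)) ≠ 0 := by
    have hc1 : volume {x : ℝ | Real.sin (π * x) = 0} = 0 := by
      apply Set.Countable.measure_zero
      apply Set.Countable.mono _ (Set.countable_range (fun n : ℤ => (n:ℝ)))
      intro x hx
      obtain ⟨n, hn⟩ := Real.sin_eq_zero_iff.mp hx
      refine ⟨n, mul_right_cancel₀ Real.pi_ne_zero ?_⟩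
      rw [hn]; ring
    have hc2 : volume {x : ℝ | Real.sin (π * (x + α)) = 0} = 0 := by
      apply Set.Countable.measure_zero
      apply Set.Countable.mono _ (Set.countable_range (fun n : ℤ => (n:ℝ) - α))
      intro x hx
      obtain ⟨n, hn⟩ := Real.sin_eq_zero_iff.mp hx
      have hnx : (n:ℝ) = x + α := by
        refine mul_right_cancel₀ Real.pi_ne_zero ?_
        rw [hn]; ring
      refine ⟨n, ?_⟩
      show (n:ℝ) - α = x
      linarith
    rw [ae_iff]
    apply measure_mono_null _ (measure_union_null hc1 hc2)
    intro x hx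
    simp only [Set.mem_setOf_eq, not_and_or, not_not] at hx
    rcases hx with h | h
    · exact Or.inl h
    · exact Or.inr h
  -- the dominating function
  set D : ℝ → ℝ := fun θ => ((mG θ)^2 + (mG (θ + α))^2)/2 with hD
  have hDint : IntervalIntegrable D volume 0 1 :=
    (mG_sq_intervalIntegrable.add (mG_sq_shift_intervalIntegrable h0 h1)).div_const 2
  -- convergence of integrals (DCT)
  have hDCT : Filter.Tendsto (fun k => ∫ θ in (0:ℝ)..1, mlf (rk k) θ * mlf (rk k) (θ + α))
      Filter.atTop (nhds (∫ θ in (0:ℝ)..1, mlf 1 θ * mlf 1 (θ + α))) := by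
    apply intervalIntegral.tendsto_integral_filter_of_dominated_convergence D
    · apply Filter.Eventually.of_forall
      intro k
      have hrabs : |rk k| < 1 := by
        rw [abs_of_nonneg (hrk_pos k).le]; exact hrk_lt k
      exact (((mlf_continuous hrabs).mul
        ((mlf_continuous hrabs).comp (by continuity))).aestronglyMeasurable).restrict
    · apply Filter.Eventually.of_forall
      intro k
      filter_upwards [hae] with θ hθ _
      have b1 := abs_mlf_le (hrk_half k) (hrk_lt k).le hθ.1
      have b2 := abs_mlf_le (hrk_half k) (hrk_lt k).le hθ.2
      rw [Real.norm_eq_abs, abs_mul]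
      have hg1 := mG_nonneg θ
      have hg2 := mG_nonneg (θ + α)
      rw [← mG] at b1
      rw [← mG] at b2
      have : |mlf (rk k) θ| * |mlf (rk k) (θ + α)| ≤ mG θ * mG (θ + α) :=
        mul_le_mul b1 b2 (abs_nonneg _) hg1
      rw [hD]
      nlinarith [sq_nonneg (mG θ - mG (θ + α))]
    · exact hDint
    · filter_upwards [hae] with θ hθ _
      have hc : ∀ x : ℝ, Real.sin (π * x) ≠ 0 →
          Filter.Tendsto (fun k => mlf (rk k) x) Filter.atTop (nhds (mlf 1 x)) := by
        intro x hsx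
        have hψ : Continuous (fun r : ℝ => ‖1 - (r:ℂ) * Complex.exp (2 * π * Complex.I * x)‖) := by
          apply continuous_norm.comp
          exact continuous_const.sub (Complex.continuous_ofReal.mul continuous_const)
        have hne : ‖1 - ((1:ℝ):ℂ) * Complex.exp (2 * π * Complex.I * x)‖ ≠ 0 := by
          intro hzero
          have := mlf_abs_sq 1 x
          rw [hzero] at this
          have hs2 : Real.sin (π * x)^2 > 0 := by positivity
          nlinarith
        have hlog : ContinuousAt (fun r : ℝ => mlf r x) 1 := by
          simp only [mlf]
          exact Filter.Tendsto.comp (Real.continuousAt_log hne).tendsto hψ.continuousAt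
        exact hlog.tendsto.comp htend
      exact (hc θ hθ.1).mul (hc (θ + α) hθ.2)
  -- convergence of sums
  have hsums : Filter.Tendsto (fun k => ∑' n : ℕ, (rk k) ^ (2*n) * Real.cos (2 * π * n * α) / (2 * n^2))
      Filter.atTop (nhds (∑' n : ℕ, Real.cos (2 * π * n * α) / (2 * (n:ℝ)^2))) := by
    apply tendsto_tsum_of_dominated_convergence (bound := fun n : ℕ => 1/(n:ℝ)^2)
    · exact Real.summable_one_div_nat_pow.mpr one_lt_two
    · intro n
      have h2 : Filter.Tendsto (fun k => (rk k)^(2*n)) Filter.atTop (nhds 1) := by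
        simpa using htend.pow (2*n)
      have := (h2.mul_const (Real.cos (2 * π * n * α))).div_const (2 * (n:ℝ)^2)
      simpa using this
    · apply Filter.Eventually.of_forall
      intro k n
      rcases Nat.eq_zero_or_pos n with hn | hn
      · subst hn; norm_num
      · have hnr : (0:ℝ) < (n:ℝ)^2 := by positivity
        rw [Real.norm_eq_abs, abs_div, abs_mul, abs_pow, abs_of_nonneg (hrk_pos k).le,
          abs_of_pos (by positivity : (0:ℝ) < 2 * (n:ℝ)^2)]
        have hr1 : (rk k)^(2*n) ≤ 1 := pow_le_one₀ (hrk_pos k).le (hrk_lt k).le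
        have hcos := Real.abs_cos_le_one (2 * π * n * α)
        have : (rk k)^(2*n) * |Real.cos (2 * π * n * α)| ≤ 1 :=
          mul_le_one₀ hr1 (abs_nonneg _) hcos
        rw [div_le_div_iff₀ (by positivity) (by positivity)]
        nlinarith
  -- identify the limits
  have hrw : (fun k => ∫ θ in (0:ℝ)..1, mlf (rk k) θ * mlf (rk k) (θ + α))
      = (fun k => ∑' n : ℕ, (rk k) ^ (2*n) * Real.cos (2 * π * n * α) / (2 * n^2)) := by
    funext k
    exact mlf_integral (hrk_pos k) (hrk_lt k) α
  rw [hrw] at hDCT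
  have hkey : ∫ θ in (0:ℝ)..1, mlf 1 θ * mlf 1 (θ + α)
      = ∑' n : ℕ, Real.cos (2 * π * n * α) / (2 * (n:ℝ)^2) :=
    tendsto_nhds_unique hDCT hsums
  have hintegrand : ∫ θ in (0:ℝ)..1,
      Real.log ‖1 - Complex.exp (2 * π * Complex.I * θ)‖ *
        Real.log ‖1 - Complex.exp (2 * π * Complex.I * (θ + α))‖
      = ∫ θ in (0:ℝ)..1, mlf 1 θ * mlf 1 (θ + α) := by
    apply intervalIntegral.integral_congr
    intro θ _
    simp [mlf]
  rw [hintegrand, hkey, sum_eval h0 h1]
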